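/- Let T be a triangulated category with arbitrary small coproducts, S = {E_α : α ∈ A} a set of objects of T, and U the smallest cocomplete pre-aisle of T containing all objects of S. Then for an object B of T, one has Hom_T(E_α[j], B) = 0 for every j ≥ 0 and every α ∈ A if, and only if, B belongs to U^⊥. -/

import Mathlib

open CategoryTheory Category Limits Pretriangulated

universe v u

namespace Paper

section Preadditive

variable {C : Type u} [Category.{v} C] [Preadditive C]

/-- An object `E` is compact if `Hom_C(E, -)` commutes with small coproducts:
every map from `E` to a coproduct factors through a finite subcoproduct
(since the comparison map `⨁ᵢ Hom(E, Xᵢ) ⟶ Hom(E, ∐ᵢ Xᵢ)` is always injective,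
this is equivalent to the usual definition). -/
def IsCompactObj (E : C) : Prop :=
  ∀ ⦃ι : Type v⦄ (X : ι → C) [HasCoproduct X] (f : E ⟶ ∐ X),
    ∃ (s : Finset ι) (g : ∀ i, E ⟶ X i), f = ∑ i ∈ s, g i ≫ Sigma.ι X i

end Preadditive

section Category

variable {C : Type u} [Category.{v} C] [Preadditive C]

/-- The right orthogonal `U^⊥` of a (full) subcategory `U`, given by the objects `Y`
such that `Hom(X, Y) = 0` for every `X` in `U`. -/
def rightPerp (U : C → Prop) : C → Prop := fun Y => ∀ ⦃X : C⦄, U X → ∀ (f : X ⟶ Y), f = 0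

end Category

section Triangulated

variable {C : Type u} [Category.{v} C] [Preadditive C] [HasZeroObject C] [HasShift C ℤ]
  [∀ (n : ℤ), (shiftFunctor C n).Additive] [Pretriangulated C]

/-- A t-structure on a (pre)triangulated category, given as a pair of full subcategories
`(T^{≤0}, T^{≥0})` (as predicates on objects, closed under isomorphisms) satisfying the
axioms (t1), (t2), (t3) of Beilinson-Bernstein-Deligne.
Note that `Y ∈ T^{≥0}[-1]` is expressed as `Ge (Y⟦(1 : ℤ)⟧)` and
`X ∈ T^{≥0}[1]` as `Ge (X⟦(-1 : ℤ)⟧)`. -/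
structure IsTStructure (Le Ge : C → Prop) : Prop where
  le_iso : ∀ {X Y : C}, (X ≅ Y) → Le X → Le Y
  ge_iso : ∀ {X Y : C}, (X ≅ Y) → Ge X → Ge Y
  /-- (t1) : `Hom(X, Y) = 0` when `X ∈ T^{≤0}` and `Y ∈ T^{≥0}[-1]` -/
  hom_zero : ∀ {X Y : C}, Le X → Ge (Y⟦(1 : ℤ)⟧) → ∀ (f : X ⟶ Y), f = 0
  /-- (t2) : `T^{≤0}[1] ⊆ T^{≤0}` -/
  le_shift : ∀ (X : C), Le X → Le (X⟦(1 : ℤ)⟧)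
  /-- (t2) : `T^{≥0} ⊆ T^{≥0}[1]` -/
  ge_shift : ∀ (X : C), Ge X → Ge (X⟦(-1 : ℤ)⟧)
  /-- (t3) : every object `X` fits in a distinguished triangle `A ⟶ X ⟶ B ⟶ A[1]`
  with `A ∈ T^{≤0}` and `B ∈ T^{≥0}[-1]`. -/
  exists_triangle : ∀ (X : C), ∃ (A B : C) (f : A ⟶ X) (g : X ⟶ B) (h : B ⟶ A⟦(1 : ℤ)⟧),
    (Triangle.mk f g h ∈ distTriang C) ∧ Le A ∧ Ge (B⟦(1 : ℤ)⟧)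

/-- A pre-aisle: a full subcategory (predicate on objects, closed under isomorphisms)
stable under the shift `X ↦ X[1]` and under extensions. -/
structure IsPreAisle (U : C → Prop) : Prop where
  iso : ∀ {X Y : C}, (X ≅ Y) → U X → U Y
  shift : ∀ (X : C), U X → U (X⟦(1 : ℤ)⟧)
  ext : ∀ (T : Triangle C), (T ∈ distTriang C) → U T.obj₁ → U T.obj₃ → U T.obj₂

/-- A cocomplete pre-aisle: a pre-aisle closed under all existing small coproducts. -/
structure IsCocompletePreAisle (U : C → Prop) extends IsPreAisle U : Prop where
  coproduct : ∀ ⦃ι : Type v⦄ (X : ι → C) [HasCoproduct X], (∀ i, U (X i)) → U (∐ X)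

/-- The smallest cocomplete pre-aisle containing a given family `S` of objects:
the intersection of all cocomplete pre-aisles containing `S`. -/
def smallestCocompletePreAisle (S : C → Prop) : C → Prop :=
  fun X => ∀ (U : C → Prop), IsCocompletePreAisle U → (∀ Y, S Y → U Y) → U X

/-- `U` is an aisle if `(U, U^⊥[1])` is a t-structure; membership of `Y` in `U^⊥[1]`
is expressed as `Y⟦-1⟧ ∈ U^⊥`. -/
def IsAisle (U : C → Prop) : Prop :=
  IsTStructure U (fun Y => rightPerp U (Y⟦(-1 : ℤ)⟧))

/-- `E` is a generator of the triangulated category `C`: any object receiving only zero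
maps from all shifts of `E` is zero. -/
def IsGeneratorObj (E : C) : Prop :=
  ∀ (M : C), (∀ (n : ℤ) (f : E⟦n⟧ ⟶ M), f = 0) → IsZero M

end Triangulated


/-- Let `T` be a triangulated category with small coproducts,
`S = {E_α : α ∈ A}` a set of objects, and `U` the smallest cocomplete pre-aisle containing `S`.
Then `Hom(E_α[j], B) = 0` for all `j ≥ 0` and all `α` if and only if `B ∈ U^⊥`. -/
theorem rightPerp_smallestCocompletePreAisle_iff {C : Type u} [Category.{v} C] [Preadditive C] [HasZeroObject C] [HasShift C ℤ]
    [∀ (n : ℤ), (shiftFunctor C n).Additive] [Pretriangulated C]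
    [HasCoproducts.{v} C]
    {A : Type v} (E : A → C) (B : C) :
    (∀ (j : ℤ), 0 ≤ j → ∀ (α : A) (f : (E α)⟦j⟧ ⟶ B), f = 0) ↔
      rightPerp (smallestCocompletePreAisle (fun X => ∃ α, E α = X)) B := by
  constructor
  · intro h X hX f
    -- the subcategory of objects all of whose nonnegative shifts kill `B`
    set V : C → Prop := fun X => ∀ (n : ℤ), 0 ≤ n → ∀ (g : X⟦n⟧ ⟶ B), g = 0 with hVdef
    have hV : IsCocompletePreAisle V := by
      refine ⟨⟨?_, ?_, ?_⟩, ?_⟩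
      · intro X Y e hX n hn g
        have h0 : (shiftFunctor C n).map e.hom ≫ g = 0 := hX n hn _
        have : g = (shiftFunctor C n).map e.inv ≫ ((shiftFunctor C n).map e.hom ≫ g) := by
          simp [← Functor.map_comp]
        rw [this, h0, Limits.comp_zero]
      · intro X hX n hn g
        have e := (shiftFunctorAdd C (1 : ℤ) n).app X
        have h0 : e.hom ≫ g = 0 := hX (1 + n) (by omega) _
        have : g = e.inv ≫ (e.hom ≫ g) := by rw [← Category.assoc, e.inv_hom_id, Category.id_comp]
        rw [this, h0, Limits.comp_zero]
      · intro T hT h1 h3 n hn g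
        have hT' := Pretriangulated.Triangle.shift_distinguished T hT n
        set T' := (CategoryTheory.shiftFunctor (Triangle C) n).obj T with hT'def
        have hob2 : T'.obj₂ = T.obj₂⟦n⟧ := rfl
        have hmor : T'.mor₁ ≫ g = 0 := by
          have : T'.mor₁ = n.negOnePow • (T.mor₁)⟦n⟧' := rfl
          change (n.negOnePow • (T.mor₁)⟦n⟧') ≫ g = 0
          rw [Units.smul_def, Preadditive.zsmul_comp, h1 n hn ((T.mor₁)⟦n⟧' ≫ g), smul_zero]
        obtain ⟨k, hk⟩ := Pretriangulated.Triangle.yoneda_exact₂ T' hT' g hmor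
        have hk0 : k = 0 := h3 n hn k
        rw [hk, hk0, Limits.comp_zero]
        rfl
      · intro ι X _ hX n hn g
        have hc := isColimitOfPreserves (shiftFunctor C n)
          (colimit.isColimit (Discrete.functor X))
        refine hc.hom_ext (fun j => ?_)
        have : ((shiftFunctor C n).mapCocone (colimit.cocone (Discrete.functor X))).ι.app j ≫ g
            = 0 := hX j.as n hn _
        simpa using this
    have hSV : ∀ Y, (∃ α, E α = Y) → V Y := by
      rintro Y ⟨α, rfl⟩ n hn g
      exact h n hn α g
    have hXV : V X := hX V hV hSV
    have h0 : (shiftFunctorZero C ℤ).hom.app X ≫ f = 0 := hXV 0 le_rfl _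
    have : f = (shiftFunctorZero C ℤ).inv.app X ≫ ((shiftFunctorZero C ℤ).hom.app X ≫ f) := by
      rw [← Category.assoc, Iso.inv_hom_id_app, Category.id_comp]
    rw [this, h0, Limits.comp_zero]
  · intro h j hj α f
    refine h ?_ f
    intro U hU hS
    refine Int.le_induction (motive := fun j _ => U ((shiftFunctor C j).obj (E α))) ?_ ?_ j hj
    · exact hU.iso ((shiftFunctorZero C ℤ).app (E α)).symm (hS _ ⟨α, rfl⟩)
    · intro j _ ih
      exact hU.iso (((shiftFunctorAdd C j (1 : ℤ)).app (E α)).symm) (hU.shift _ ih)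

end Paper
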